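/- arXiv:math/9207217 — 5 statements merged into one kernel-verified Lean document; each statement's English description precedes it below -/
import Mathlib

section
/- Let G be a finite group and let H, K be subgroups of G. Then H and K are pointwise conjugate in G if and only if for every g ∈ G, the cardinality of H ∩ (g) equals the cardinality of K ∩ (g), where (g) denotes the conjugacy class of g in G. -/
/-- Two subgroups `H, K ≤ G` are *pointwise conjugate in `G`* if there is a bijection
`α : H → K` such that every `h ∈ H` is sent to a conjugate `α h = gₕ⁻¹ * h * gₕ` of itself,
for some `gₕ ∈ G` depending on `h`. -/
def PointwiseConj {G : Type*} [Group G] (H K : Subgroup G) : Prop :=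
  ∃ α : H ≃ K, ∀ h : H, ∃ g : G, (α h : G) = g⁻¹ * h * g

/-- Two subgroups `H, K` of a finite group `G` are pointwise conjugate iff every conjugacy
class `(g)` of `G` meets `H` and `K` in the same number of elements. -/
theorem pointwiseConj_iff_card_inter_conjClass_eq
    (G : Type*) [Group G] [Fintype G] (H K : Subgroup G) :
    PointwiseConj H K ↔
      ∀ g : G, Nat.card {x : G // x ∈ H ∧ IsConj g x} = Nat.card {x : G // x ∈ K ∧ IsConj g x} := by
  classical
  constructor
  · rintro ⟨α, hα⟩ g
    have key : ∀ h : H, IsConj (h : G) ((α h : K) : G) := by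
      intro h
      obtain ⟨c, hc⟩ := hα h
      exact isConj_iff.mpr ⟨c⁻¹, by simp [hc, mul_assoc]⟩
    have key' : ∀ k : K, IsConj ((α.symm k : H) : G) (k : G) := by
      intro k
      have := key (α.symm k)
      rwa [α.apply_symm_apply] at this
    refine Nat.card_congr ⟨
      fun x => ⟨(α ⟨x.1, x.2.1⟩ : G), (α ⟨x.1, x.2.1⟩).2, x.2.2.trans (key ⟨x.1, x.2.1⟩)⟩,
      fun y => ⟨(α.symm ⟨y.1, y.2.1⟩ : G), (α.symm ⟨y.1, y.2.1⟩).2,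
        y.2.2.trans (key' ⟨y.1, y.2.1⟩).symm⟩, ?_, ?_⟩
    · intro x; ext; simp
    · intro y; ext; simp
  · intro hcard
    have e : ∀ c : ConjClasses G,
        Nonempty ({h : H // ConjClasses.mk (h : G) = c} ≃
          {k : K // ConjClasses.mk (k : G) = c}) := by
      intro c
      obtain ⟨g, rfl⟩ : ∃ g : G, ConjClasses.mk g = c := Quotient.exists_rep c
      have eH : {h : H // ConjClasses.mk (h : G) = ConjClasses.mk g} ≃
          {x : G // x ∈ H ∧ IsConj g x} :=
        ⟨fun h => ⟨h.1.1, h.1.2, (ConjClasses.mk_eq_mk_iff_isConj.1 h.2).symm⟩,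
         fun x => ⟨⟨x.1, x.2.1⟩, ConjClasses.mk_eq_mk_iff_isConj.2 x.2.2.symm⟩,
         fun h => by ext; rfl, fun x => by ext; rfl⟩
      have eK : {k : K // ConjClasses.mk (k : G) = ConjClasses.mk g} ≃
          {x : G // x ∈ K ∧ IsConj g x} :=
        ⟨fun h => ⟨h.1.1, h.1.2, (ConjClasses.mk_eq_mk_iff_isConj.1 h.2).symm⟩,
         fun x => ⟨⟨x.1, x.2.1⟩, ConjClasses.mk_eq_mk_iff_isConj.2 x.2.2.symm⟩,
         fun h => by ext; rfl, fun x => by ext; rfl⟩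
      have : Nat.card {h : H // ConjClasses.mk (h : G) = ConjClasses.mk g} =
          Nat.card {k : K // ConjClasses.mk (k : G) = ConjClasses.mk g} := by
        rw [Nat.card_congr eH, Nat.card_congr eK]; exact hcard g
      exact Finite.card_eq.mp this
    let β := fun c => (e c).some
    let α : H ≃ K :=
      (Equiv.sigmaFiberEquiv (fun h : H => ConjClasses.mk (h : G))).symm.trans
        ((Equiv.sigmaCongrRight β).trans
          (Equiv.sigmaFiberEquiv (fun k : K => ConjClasses.mk (k : G))))
    refine ⟨α, fun h => ?_⟩
    have hm : ConjClasses.mk ((α h : K) : G) = ConjClasses.mk (h : G) := by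
      show ConjClasses.mk ((β (ConjClasses.mk (h : G)) ⟨h, rfl⟩ : K) : G) = _
      exact (β (ConjClasses.mk (h : G)) ⟨h, rfl⟩).2
    obtain ⟨c, hc⟩ := isConj_iff.1 (ConjClasses.mk_eq_mk_iff_isConj.1 hm.symm)
    exact ⟨c⁻¹, by simp [← hc, mul_assoc]⟩
end

section
/- Let p be a prime, P a finite p-group, and C₁, C₂ finite cyclic groups of order prime to p. Let φᵢ : Cᵢ → Aut(P) (i = 1, 2) be group homomorphisms such that the composite of φᵢ with the projection Aut(P) → Out(P) = Aut(P)/Inn(P) is injective. If the images of C₁ and C₂ in Out(P) are conjugate subgroups of Out(P), then the semidirect products P ⋊_{φ₁} C₁ and P ⋊_{φ₂} C₂ are isomorphic as groups. -/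
open Subgroup MulAction Pointwise

section Abelian

/-- wrapper for `Quotient.mk''` keeping the type `QuotientDiff` un-unfolded. -/
def QDmk {G : Type*} [Group G] (Z : Subgroup G) [IsMulCommutative Z] [Z.FiniteIndex]
    (T : Z.LeftTransversal) : Z.QuotientDiff := Quotient.mk'' T

theorem QDmk_smul {G : Type*} [Group G] (Z : Subgroup G) [IsMulCommutative Z] [Z.FiniteIndex]
    [Z.Normal] (g : G) (T : Z.LeftTransversal) :
    g • QDmk Z T = QDmk Z (MulOpposite.op g⁻¹ • T) := rfl

variable {G : Type*} [Group G] [Finite G] (Z : Subgroup G) [Z.Normal] [IsMulCommutative Z] [Z.FiniteIndex]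

theorem eq_stab (hco : Nat.Coprime (Nat.card Z) Z.index) {K : Subgroup G}
    (hK : IsComplement' Z K) :
    K = stabilizer G (QDmk Z ⟨(K : Set G), hK.symm⟩) := by
  set α : Z.QuotientDiff := QDmk Z ⟨(K : Set G), hK.symm⟩ with hα
  have hle : K ≤ stabilizer G α := by
    intro k hk
    have : (MulOpposite.op k⁻¹ • (⟨(K : Set G), hK.symm⟩ :
        Z.LeftTransversal)) = ⟨(K : Set G), hK.symm⟩ := by
      apply Subtype.ext
      show MulOpposite.op k⁻¹ • (K : Set G) = (K : Set G)
      ext x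
      simp only [Set.mem_smul_set]
      constructor
      · rintro ⟨y, hy, rfl⟩
        exact K.mul_mem hy (K.inv_mem hk)
      · intro hx
        exact ⟨x * k, K.mul_mem hx hk, by simp [MulOpposite.smul_eq_mul_unop]⟩
    show k • α = α
    rw [hα, QDmk_smul]
    exact congrArg _ this
  have hstab : IsComplement' Z (stabilizer G α) :=
    Subgroup.isComplement'_stabilizer_of_coprime hco
  have hcard : Nat.card (stabilizer G α) ≤ Nat.card K := by
    have h1 := hK.card_mul
    have h2 := hstab.card_mul
    have hZ : 0 < Nat.card Z := Nat.card_pos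
    exact le_of_eq (Nat.eq_of_mul_eq_mul_left hZ (h2.trans h1.symm))
  exact (Subgroup.eq_of_le_of_card_ge hle hcard)

theorem conj_of_isComplement'_abelian (hco : Nat.Coprime (Nat.card Z) Z.index)
    {H K : Subgroup G} (hH : IsComplement' Z H) (hK : IsComplement' Z K) :
    ∃ g : G, H.map (MulAut.conj g).toMonoidHom = K := by
  obtain ⟨z, hz⟩ := Subgroup.exists_smul_eq hco
    (QDmk Z ⟨(H : Set G), hH.symm⟩) (QDmk Z ⟨(K : Set G), hK.symm⟩)
  refine ⟨(z : G), ?_⟩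
  rw [eq_stab Z hco hH, eq_stab Z hco hK, ← MulAction.stabilizer_smul_eq_stabilizer_map_conj]
  have hz' : (z : G) • QDmk Z ⟨(H : Set G), hH.symm⟩ = QDmk Z ⟨(K : Set G), hK.symm⟩ := hz
  exact congrArg _ hz'

end Abelian

section PGroup
open Subgroup

lemma map_conj_comp {G : Type*} [Group G] (H : Subgroup G) (a b : G) :
    (H.map (MulAut.conj b).toMonoidHom).map (MulAut.conj a).toMonoidHom
      = H.map (MulAut.conj (a * b)).toMonoidHom := by
  rw [Subgroup.map_map]
  congr 1
  ext x
  simp [mul_assoc]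

lemma card_map_mk'_mul {G : Type*} [Group G] [Finite G] (Z : Subgroup G) [Z.Normal]
    (H : Subgroup G) :
    Nat.card (H.map (QuotientGroup.mk' Z)) * Nat.card (Z.subgroupOf H) = Nat.card H := by
  set f := (QuotientGroup.mk' Z).comp H.subtype with hf
  have hker : f.ker = Z.subgroupOf H := by
    ext x
    simp only [MonoidHom.mem_ker, hf, MonoidHom.comp_apply, Subgroup.coe_subtype,
      QuotientGroup.mk'_apply, Subgroup.mem_subgroupOf]
    exact QuotientGroup.eq_one_iff _
  have hrange : f.range = H.map (QuotientGroup.mk' Z) := by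
    rw [hf, MonoidHom.range_comp, Subgroup.range_subtype]
  have h1 : Nat.card H = Nat.card (H ⧸ f.ker) * Nat.card f.ker :=
    Subgroup.card_eq_card_quotient_mul_card_subgroup f.ker
  have h2 : Nat.card (H ⧸ f.ker) = Nat.card f.range :=
    Nat.card_congr (QuotientGroup.quotientKerEquivRange f).toEquiv
  rw [h1, h2, hrange, hker]

lemma card_subgroupOf_of_le {G : Type*} [Group G] {Z M : Subgroup G} (h : Z ≤ M) :
    Nat.card (Z.subgroupOf M) = Nat.card Z :=
  Nat.card_congr (Subgroup.subgroupOfEquivOfLe h).toEquiv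

lemma subgroupOf_eq_bot_of_disjoint {G : Type*} [Group G] {Z H : Subgroup G}
    (h : Disjoint Z H) : Z.subgroupOf H = ⊥ := by
  rw [eq_bot_iff]
  intro x hx
  have hx1 : (x : G) = 1 := Subgroup.disjoint_def.mp h hx x.2
  exact Subgroup.mem_bot.mpr (Subtype.ext hx1)

lemma card_map_conj {G : Type*} [Group G] [Finite G] (H : Subgroup G) (g : G) :
    Nat.card (H.map (MulAut.conj g).toMonoidHom) = Nat.card H :=
  (Nat.card_congr (H.equivMapOfInjective _ (MulAut.conj g).injective).toEquiv).symm

lemma isComplement'_conj {G : Type*} [Group G] [Finite G] {N H : Subgroup G} [N.Normal]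
    (h : IsComplement' N H) (g : G) :
    IsComplement' N (H.map (MulAut.conj g).toMonoidHom) := by
  apply Subgroup.isComplement'_of_card_mul_and_disjoint
  · rw [card_map_conj]; exact h.card_mul
  · rw [Subgroup.disjoint_def]
    rintro x hxN ⟨y, hy, rfl⟩
    have h1 : (MulAut.conj g) y ∈ N := hxN
    have h2 : y ∈ N := by
      have := (‹N.Normal›).conj_mem _ h1 g⁻¹
      simpa [MulAut.conj_apply, mul_assoc] using this
    have : y = 1 := Subgroup.disjoint_def.mp h.disjoint h2 hy
    simp [this]

theorem conj_of_isComplement'_pgroup {p : ℕ} (hp : p.Prime) (n : ℕ) :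
    ∀ (G : Type) (_ : Group G) (_ : Finite G) (N : Subgroup G) (_ : N.Normal),
      Nat.card N ≤ n → IsPGroup p N → Nat.Coprime (Nat.card N) N.index →
      ∀ (H K : Subgroup G), IsComplement' N H → IsComplement' N K →
      ∃ g : G, H.map (MulAut.conj g).toMonoidHom = K := by
  induction n with
  | zero =>
    intro G _ _ N _ hn _ _ _ _ _ _
    exact absurd (Nat.card_pos (α := N)) (by omega)
  | succ n IH =>
    intro G _ _ N hNnorm hn hNp hco H K hH hK
    haveI : Fact p.Prime := ⟨hp⟩
    by_cases hab : (N : Set G) ⊆ Subgroup.centralizer (N : Set G)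
    · -- abelian case
      haveI : IsMulCommutative N :=
        ⟨⟨fun a b => Subtype.ext ((Subgroup.mem_centralizer_iff.mp (hab b.2)) a a.2)⟩⟩
      haveI : N.FiniteIndex := ⟨Subgroup.index_ne_zero_of_finite⟩
      exact conj_of_isComplement'_abelian N hco hH hK
    · -- non-abelian case: quotient by the center of N
      have hNbot : N ≠ ⊥ := by
        rintro rfl
        refine hab ?_
        intro x hx
        have hx1 : x = 1 := by simpa using hx
        subst hx1
        exact SetLike.mem_coe.mpr (Subgroup.one_mem _)
      set Z : Subgroup G := Subgroup.centralizer (N : Set G) ⊓ N with hZdef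
      have hZle : Z ≤ N := inf_le_right
      have hZnorm : Z.Normal := by
        constructor
        intro z hzmem g
        have hz12 := Subgroup.mem_inf.mp hzmem
        obtain ⟨hz1, hz2⟩ := hz12
        refine Subgroup.mem_inf.mpr ⟨?_, hNnorm.conj_mem _ hz2 g⟩
        · rw [Subgroup.mem_centralizer_iff]
          intro m hm
          have hm' : g⁻¹ * m * g ∈ N := by
            have := hNnorm.conj_mem _ hm g⁻¹
            simpa [mul_assoc] using this
          have := Subgroup.mem_centralizer_iff.mp hz1 _ hm'
          -- this : (g⁻¹ * m * g) * z = z * (g⁻¹ * m * g)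
          have h3 := congrArg (fun t => g * t * g⁻¹) this
          simpa [mul_assoc] using h3
      haveI := hZnorm
      have hZcomm : IsMulCommutative Z := by
        constructor
        constructor
        intro a b
        have ha : (a : G) ∈ Subgroup.centralizer (N : Set G) := (Subgroup.mem_inf.mp a.2).1
        have hb : (b : G) ∈ N := (Subgroup.mem_inf.mp b.2).2
        have hc := Subgroup.mem_centralizer_iff.mp ha _ hb
        exact Subtype.ext (by rw [Subgroup.coe_mul, Subgroup.coe_mul]; exact hc.symm)
      haveI := hZcomm
      have hZbot : Z ≠ ⊥ := by
        haveI : Nontrivial N := (Subgroup.nontrivial_iff_ne_bot N).mpr hNbot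
        haveI : Nontrivial (Subgroup.center N) := hNp.center_nontrivial
        obtain ⟨z, hz⟩ := exists_ne (1 : Subgroup.center N)
        intro hbot
        apply hz
        have hzZ : ((z : N) : G) ∈ Z := by
          refine Subgroup.mem_inf.mpr ⟨?_, (z : N).2⟩
          rw [Subgroup.mem_centralizer_iff]
          intro m hm
          have := Subgroup.mem_center_iff.mp z.2 ⟨m, hm⟩
          exact congrArg Subtype.val this
        rw [hbot, Subgroup.mem_bot] at hzZ
        exact Subtype.ext (Subtype.ext hzZ)
      -- quotient by Z
      set π : G →* G ⧸ Z := QuotientGroup.mk' Z with hπ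
      have hπsurj : Function.Surjective π := QuotientGroup.mk'_surjective Z
      set N' : Subgroup (G ⧸ Z) := N.map π with hN'
      set H' : Subgroup (G ⧸ Z) := H.map π with hH'
      set K' : Subgroup (G ⧸ Z) := K.map π with hK'
      haveI : N'.Normal := hNnorm.map π hπsurj
      have hkerπ : π.ker = Z := QuotientGroup.ker_mk' Z
      -- cardinalities
      have hcardN : Nat.card N' * Nat.card Z = Nat.card N := by
        have := card_map_mk'_mul Z N
        rwa [card_subgroupOf_of_le hZle] at this
      have hdisjH : Disjoint Z H := hH.disjoint.mono_left hZle
      have hdisjK : Disjoint Z K := hK.disjoint.mono_left hZle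
      have hcardH : Nat.card H' = Nat.card H := by
        have := card_map_mk'_mul Z H
        rwa [subgroupOf_eq_bot_of_disjoint hdisjH, Subgroup.card_bot, mul_one] at this
      have hcardK : Nat.card K' = Nat.card K := by
        have := card_map_mk'_mul Z K
        rwa [subgroupOf_eq_bot_of_disjoint hdisjK, Subgroup.card_bot, mul_one] at this
      have hcardG : Nat.card (G ⧸ Z) * Nat.card Z = Nat.card G := by
        have := Subgroup.card_eq_card_quotient_mul_card_subgroup Z
        omega
      have hZpos : 0 < Nat.card Z := Nat.card_pos
      have hZone : 1 < Nat.card Z := (Subgroup.one_lt_card_iff_ne_bot Z).mpr hZbot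
      -- index
      have hidx : N'.index = N.index := Subgroup.index_map_eq N hπsurj (hkerπ.le.trans hZle)
      have hNdvd : Nat.card N' ∣ Nat.card N := Dvd.intro _ hcardN
      have hco' : Nat.Coprime (Nat.card N') N'.index := by
        rw [hidx]
        exact Nat.Coprime.coprime_dvd_left hNdvd hco
      -- cards of H and K equal the index of N
      have hcardHN : Nat.card H = N.index := (hH.symm.index_eq_card).symm
      have hcardKN : Nat.card K = N.index := (hK.symm.index_eq_card).symm
      -- complements in the quotient
      have hcompH' : IsComplement' N' H' := by
        apply Subgroup.isComplement'_of_coprime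
        · have h1 := hH.card_mul
          have h2 : Nat.card N' * Nat.card H' * Nat.card Z = Nat.card G := by
            rw [hcardH]
            calc Nat.card N' * Nat.card H * Nat.card Z
                = (Nat.card N' * Nat.card Z) * Nat.card H := by ring
              _ = Nat.card N * Nat.card H := by rw [hcardN]
              _ = Nat.card G := h1
          have h3 := hcardG
          exact Nat.eq_of_mul_eq_mul_right hZpos (by omega)
        · rw [hcardH, hcardHN, ← hidx]
          exact hco'
      have hcompK' : IsComplement' N' K' := by
        apply Subgroup.isComplement'_of_coprime
        · have h1 := hK.card_mul
          have h2 : Nat.card N' * Nat.card K' * Nat.card Z = Nat.card G := by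
            rw [hcardK]
            calc Nat.card N' * Nat.card K * Nat.card Z
                = (Nat.card N' * Nat.card Z) * Nat.card K := by ring
              _ = Nat.card N * Nat.card K := by rw [hcardN]
              _ = Nat.card G := h1
          have h3 := hcardG
          exact Nat.eq_of_mul_eq_mul_right hZpos (by omega)
        · rw [hcardK, hcardKN, ← hidx]
          exact hco'
      -- apply the induction hypothesis
      have hsmall : Nat.card N' ≤ n := by
        have h1 : 0 < Nat.card N' := Nat.card_pos
        nlinarith [hcardN, hn, hZone]
      obtain ⟨gbar, hgbar⟩ := IH (G ⧸ Z) inferInstance inferInstance N' inferInstance hsmall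
        (hNp.map π) hco' H' K' hcompH' hcompK'
      obtain ⟨g, rfl⟩ := hπsurj gbar
      -- pull back: (H conjugated by g) and K generate the same subgroup with Z
      set H₂ : Subgroup G := H.map (MulAut.conj g).toMonoidHom with hH₂
      have hmapH₂ : H₂.map π = K' := by
        rw [hH₂, Subgroup.map_map]
        have : π.comp (MulAut.conj g).toMonoidHom
            = (MulAut.conj (π g)).toMonoidHom.comp π := by
          ext x
          simp
        rw [this, ← Subgroup.map_map]
        exact hgbar
      have hsup : H₂ ⊔ Z = K ⊔ Z := by
        have h1 : Subgroup.comap π (H₂.map π) = H₂ ⊔ Z := by rw [Subgroup.comap_map_eq, hkerπ]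
        have h2 : Subgroup.comap π (K.map π) = K ⊔ Z := by rw [Subgroup.comap_map_eq, hkerπ]
        rw [← h1, ← h2, hmapH₂]
      set M : Subgroup G := K ⊔ Z with hM
      have hZM : Z ≤ M := le_sup_right
      have hKM : K ≤ M := le_sup_left
      have hH₂M : H₂ ≤ M := by rw [← hsup]; exact le_sup_left
      have hcompH₂ : IsComplement' N H₂ := isComplement'_conj hH g
      have hcardH₂ : Nat.card H₂ = Nat.card H := card_map_conj H g
      -- card M = card K * card Z
      have hmapM : M.map π = K' := by
        rw [hM, Subgroup.map_sup]
        have hZmap : Z.map π = ⊥ := by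
          rw [eq_bot_iff]
          rintro x ⟨z, hz, rfl⟩
          rw [Subgroup.mem_bot, hπ, QuotientGroup.mk'_apply, QuotientGroup.eq_one_iff]
          exact hz
        rw [hZmap, sup_bot_eq]
      have hcardM : Nat.card M = Nat.card K * Nat.card Z := by
        have := card_map_mk'_mul Z M
        rw [← hπ, hmapM, hcardK, card_subgroupOf_of_le hZM] at this
        omega
      -- work inside M
      haveI : (Z.subgroupOf M).Normal := hZnorm.subgroupOf M
      haveI : IsMulCommutative (Z.subgroupOf M) := inferInstance
      haveI : (Z.subgroupOf M).FiniteIndex := ⟨Subgroup.index_ne_zero_of_finite⟩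
      have hcardZM : Nat.card (Z.subgroupOf M) = Nat.card Z := card_subgroupOf_of_le hZM
      have hidxZM : (Z.subgroupOf M).index = Nat.card K := by
        have h1 : (Z.subgroupOf M).index * Nat.card (Z.subgroupOf M) = Nat.card M := by
          rw [Subgroup.index_eq_card]
          exact (Subgroup.card_eq_card_quotient_mul_card_subgroup (Z.subgroupOf M)).symm
        rw [hcardZM] at h1
        rw [hcardM] at h1
        exact Nat.eq_of_mul_eq_mul_right hZpos h1
      have hcoM : Nat.Coprime (Nat.card (Z.subgroupOf M)) (Z.subgroupOf M).index := by
        rw [hcardZM, hidxZM, hcardKN]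
        exact Nat.Coprime.coprime_dvd_left (Subgroup.card_dvd_of_le hZle) hco
      have hcardHM : Nat.card (H₂.subgroupOf M) = Nat.card K := by
        rw [card_subgroupOf_of_le hH₂M, hcardH₂, hcardHN, hcardKN]
      have hcardKM : Nat.card (K.subgroupOf M) = Nat.card K := card_subgroupOf_of_le hKM
      have hcompHM : IsComplement' (Z.subgroupOf M) (H₂.subgroupOf M) := by
        apply Subgroup.isComplement'_of_coprime
        · rw [hcardZM, hcardHM, Nat.mul_comm, ← hcardM]
        · rw [hcardZM, hcardHM, hcardKN]
          exact Nat.Coprime.coprime_dvd_left (Subgroup.card_dvd_of_le hZle) hco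
      have hcompKM : IsComplement' (Z.subgroupOf M) (K.subgroupOf M) := by
        apply Subgroup.isComplement'_of_coprime
        · rw [hcardZM, hcardKM, Nat.mul_comm, ← hcardM]
        · rw [hcardZM, hcardKM, hcardKN]
          exact Nat.Coprime.coprime_dvd_left (Subgroup.card_dvd_of_le hZle) hco
      obtain ⟨m, hm⟩ := conj_of_isComplement'_abelian (Z.subgroupOf M) hcoM hcompHM hcompKM
      -- push the conjugating element back to G
      refine ⟨(m : G) * g, ?_⟩
      rw [← map_conj_comp, ← hH₂]
      have hmain := congrArg (Subgroup.map M.subtype) hm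
      rw [Subgroup.map_map] at hmain
      have hcomm : M.subtype.comp (MulAut.conj m).toMonoidHom
          = (MulAut.conj (m : G)).toMonoidHom.comp M.subtype := by
        ext x
        simp
      rw [hcomm, ← Subgroup.map_map, Subgroup.subgroupOf_map_subtype,
        Subgroup.subgroupOf_map_subtype, inf_eq_left.mpr hH₂M, inf_eq_left.mpr hKM] at hmain
      exact hmain

lemma range_codRestrict_map_subtype {G H : Type*} [Group G] [Group H] (f : G →* H)
    (S : Subgroup H) (h : ∀ x, f x ∈ S) :
    ((f.codRestrict S h).range.map S.subtype) = f.range := by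
  ext x
  constructor
  · rintro ⟨y, ⟨c, rfl⟩, rfl⟩
    exact ⟨c, rfl⟩
  · rintro ⟨c, rfl⟩
    exact ⟨f.codRestrict S h c, ⟨c, rfl⟩, rfl⟩

/-- Isomorphic semidirect products from compatible pairs. -/
def sdIso {P C₁ C₂ : Type} [Group P] [Group C₁] [Group C₂]
    (φ₁ : C₁ →* MulAut P) (φ₂ : C₂ →* MulAut P) (α : MulAut P) (f : C₁ ≃* C₂)
    (h : ∀ c, φ₂ (f c) = α * φ₁ c * α⁻¹) :
    (P ⋊[φ₁] C₁) ≃* (P ⋊[φ₂] C₂) where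
  toFun x := ⟨α x.left, f x.right⟩
  invFun y := ⟨α⁻¹ y.left, f.symm y.right⟩
  left_inv x := by ext <;> simp
  right_inv y := by ext <;> simp
  map_mul' x y := by
    ext
    · show α (x.left * φ₁ x.right y.left) = α x.left * φ₂ (f x.right) (α y.left)
      rw [h]
      simp [MulAut.mul_apply, map_mul]
    · exact map_mul f x.right y.right

end PGroup




/-- The subgroup of inner automorphisms of `P`. -/
def Inn (P : Type) [Group P] : Subgroup (MulAut P) := (MulAut.conj (G := P)).range

instance Inn.normal (P : Type) [Group P] : (Inn P).Normal := by
  constructor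
  rintro - ⟨q, rfl⟩ g
  refine ⟨g q, ?_⟩
  ext x
  simp [MulAut.conj_apply, map_mul, map_inv]

/-- The outer automorphism group `Out P = Aut(P)/Inn(P)`. -/
def Out (P : Type) [Group P] : Type := MulAut P ⧸ Inn P

instance (P : Type) [Group P] : Group (Out P) := QuotientGroup.Quotient.group _

/-- The canonical projection `Aut(P) → Out(P)`. -/
def toOut (P : Type) [Group P] : MulAut P →* Out P := QuotientGroup.mk' (Inn P)

/-- **Theorem 0.5 (algebraic form).**  Let `P` be a finite `p`-group and `C₁, C₂` finite cyclic
groups of order prime to `p`, acting on `P` via `φᵢ : Cᵢ → Aut(P)` in such a way that the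
composites `Cᵢ → Aut(P) → Out(P)` are injective.  If the images of `C₁` and `C₂` in `Out(P)`
are conjugate subgroups, then `P ⋊[φ₁] C₁ ≅ P ⋊[φ₂] C₂`. -/
theorem semidirectProduct_iso_of_conj_image
    (p : ℕ) (hp : p.Prime) (P : Type) [Group P] [Fintype P] (hP : IsPGroup p P)
    (C₁ C₂ : Type) [Group C₁] [Fintype C₁] [Group C₂] [Fintype C₂]
    (hC₁ : IsCyclic C₁) (hC₂ : IsCyclic C₂)
    (hc₁ : Nat.Coprime (Nat.card C₁) p) (hc₂ : Nat.Coprime (Nat.card C₂) p)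
    (φ₁ : C₁ →* MulAut P) (φ₂ : C₂ →* MulAut P)
    (hφ₁ : Function.Injective ((toOut P).comp φ₁))
    (hφ₂ : Function.Injective ((toOut P).comp φ₂))
    (hconj : ∃ g : Out P,
      (fun x => g⁻¹ * x * g) '' (((toOut P).comp φ₁).range : Set (Out P)) =
        (((toOut P).comp φ₂).range : Set (Out P))) :
    Nonempty ((P ⋊[φ₁] C₁) ≃* (P ⋊[φ₂] C₂)) := by
  haveI : Fact p.Prime := ⟨hp⟩
  obtain ⟨g, hg⟩ := hconj
  obtain ⟨β₀, hβ₀⟩ := QuotientGroup.mk'_surjective (Inn P) g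
  have hβ₀' : toOut P β₀ = g := hβ₀
  -- conjugated version of φ₁
  let ψ₁ : C₁ →* MulAut P := (MulAut.conj β₀⁻¹).toMonoidHom.comp φ₁
  have hψ₁app : ∀ c, ψ₁ c = β₀⁻¹ * φ₁ c * β₀ := by
    intro c
    show (MulAut.conj β₀⁻¹) (φ₁ c) = _
    rw [MulAut.conj_apply, inv_inv]
  have hout : ∀ c, toOut P (ψ₁ c) = g⁻¹ * toOut P (φ₁ c) * g := by
    intro c
    rw [hψ₁app, map_mul, map_mul, map_inv, hβ₀']
  have hψ₁out_inj : Function.Injective ((toOut P).comp ψ₁) := by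
    intro a b hab
    apply hφ₁
    simp only [MonoidHom.comp_apply] at hab ⊢
    rw [hout, hout] at hab
    exact mul_left_cancel (mul_right_cancel hab)
  have hrange : ((toOut P).comp ψ₁).range = ((toOut P).comp φ₂).range := by
    ext y
    constructor
    · rintro ⟨c, rfl⟩
      have hmem : ((toOut P).comp ψ₁) c ∈ ((((toOut P).comp φ₂).range : Subgroup (Out P)) :
          Set (Out P)) := by
        rw [← hg]
        exact ⟨toOut P (φ₁ c), ⟨c, rfl⟩, ((hout c).symm : _)⟩
      exact hmem
    · intro hy
      have hy' : y ∈ ((((toOut P).comp φ₂).range : Subgroup (Out P)) : Set (Out P)) := hy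
      rw [← hg] at hy'
      obtain ⟨x, hx, rfl⟩ := hy'
      obtain ⟨c, rfl⟩ := hx
      exact ⟨c, (hout c : _)⟩
  have hφ₂inj : Function.Injective φ₂ := fun a b hab => hφ₂ (by
    simp only [MonoidHom.comp_apply, hab])
  have hψ₁inj : Function.Injective ψ₁ := fun a b hab => hψ₁out_inj (by
    simp only [MonoidHom.comp_apply, hab])
  -- the ambient subgroup A = preimage of K₂ in Aut P
  let K₂ : Subgroup (Out P) := ((toOut P).comp φ₂).range
  let A : Subgroup (MulAut P) := K₂.comap (toOut P)
  have hInnA : Inn P ≤ A := by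
    intro x hx
    have hx1 : toOut P x = 1 := (QuotientGroup.eq_one_iff x).mpr hx
    show toOut P x ∈ K₂
    rw [hx1]
    exact K₂.one_mem
  have hmemψ : ∀ c, ψ₁ c ∈ A := by
    intro c
    show toOut P (ψ₁ c) ∈ K₂
    have h1 : toOut P (ψ₁ c) ∈ ((toOut P).comp ψ₁).range := ⟨c, rfl⟩
    rwa [hrange] at h1
  have hmemφ₂ : ∀ c, φ₂ c ∈ A := by
    intro c
    show toOut P (φ₂ c) ∈ K₂
    exact ⟨c, rfl⟩
  let Ψ₁ : C₁ →* A := ψ₁.codRestrict A hmemψ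
  let Ψ₂ : C₂ →* A := φ₂.codRestrict A hmemφ₂
  let H : Subgroup A := Ψ₁.range
  let K : Subgroup A := Ψ₂.range
  let N : Subgroup A := (Inn P).subgroupOf A
  haveI hNnorm : N.Normal := Subgroup.normal_subgroupOf
  -- Inn P is a p-group
  have hInnP : IsPGroup p (Inn P) := by
    have h1 : IsPGroup p (⊤ : Subgroup P) := hP.to_subgroup ⊤
    have h2 := h1.map (MulAut.conj (G := P))
    rw [← MonoidHom.range_eq_map] at h2
    exact h2
  have hNp : IsPGroup p N :=
    IsPGroup.of_injective hInnP (Subgroup.subgroupOfEquivOfLe hInnA).toMonoidHom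
      (Subgroup.subgroupOfEquivOfLe hInnA).injective
  -- cardinalities
  have hcardK₂ : Nat.card K₂ = Nat.card C₂ :=
    (Nat.card_congr (MonoidHom.ofInjective hφ₂).toEquiv).symm
  have hc12 : Nat.card C₁ = Nat.card C₂ := by
    calc Nat.card C₁ = Nat.card ((toOut P).comp ψ₁).range :=
          Nat.card_congr (MonoidHom.ofInjective hψ₁out_inj).toEquiv
      _ = Nat.card K₂ := by rw [hrange]
      _ = Nat.card C₂ := hcardK₂
  have hcardN : Nat.card N = Nat.card (Inn P) := card_subgroupOf_of_le hInnA
  let ρ : A →* Out P := (toOut P).comp A.subtype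
  have hkerρ : ρ.ker = N := by
    ext x
    constructor
    · intro hx
      have hx' : toOut P (x : MulAut P) = 1 := hx
      exact Subgroup.mem_subgroupOf.mpr ((QuotientGroup.eq_one_iff _).mp hx')
    · intro hx
      show toOut P (x : MulAut P) = 1
      exact (QuotientGroup.eq_one_iff _).mpr (Subgroup.mem_subgroupOf.mp hx)
  have hrangeρ : ρ.range = K₂ := by
    show ((toOut P).comp A.subtype).range = K₂
    rw [MonoidHom.range_comp, Subgroup.range_subtype]
    rw [Subgroup.map_comap_eq]
    have htop : (toOut P).range = ⊤ :=
      MonoidHom.range_eq_top_of_surjective _ (QuotientGroup.mk'_surjective (Inn P))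
    rw [htop]
    exact top_inf_eq K₂
  have hcardA : Nat.card A = Nat.card K₂ * Nat.card N := by
    have h1 : Nat.card A = Nat.card (A ⧸ ρ.ker) * Nat.card ρ.ker :=
      Subgroup.card_eq_card_quotient_mul_card_subgroup ρ.ker
    have h2 : Nat.card (A ⧸ ρ.ker) = Nat.card ρ.range :=
      Nat.card_congr (QuotientGroup.quotientKerEquivRange ρ).toEquiv
    rw [h1, h2, hrangeρ, hkerρ]
  have hNpos : 0 < Nat.card N := Nat.card_pos
  have hidxN : N.index = Nat.card K₂ := by
    have h1 : Nat.card A = N.index * Nat.card N := by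
      rw [Subgroup.index_eq_card]
      exact Subgroup.card_eq_card_quotient_mul_card_subgroup N
    rw [hcardA] at h1
    exact (Nat.eq_of_mul_eq_mul_right hNpos h1.symm)
  obtain ⟨k, hk⟩ := IsPGroup.iff_card.mp hNp
  have hcoN : Nat.Coprime (Nat.card N) N.index := by
    rw [hk, hidxN, hcardK₂]
    exact Nat.Coprime.pow_left k hc₂.symm
  -- H and K are complements of N in A
  have hΨ₁inj : Function.Injective Ψ₁ := fun a b hab => hψ₁inj (Subtype.ext_iff.mp hab)
  have hΨ₂inj : Function.Injective Ψ₂ := fun a b hab => hφ₂inj (Subtype.ext_iff.mp hab)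
  have hcardH : Nat.card H = Nat.card C₁ :=
    (Nat.card_congr (MonoidHom.ofInjective hΨ₁inj).toEquiv).symm
  have hcardK : Nat.card K = Nat.card C₂ :=
    (Nat.card_congr (MonoidHom.ofInjective hΨ₂inj).toEquiv).symm
  have hcH : Subgroup.IsComplement' N H := by
    apply Subgroup.isComplement'_of_coprime
    · rw [hcardH, hc12, hcardA, ← hcardK₂, Nat.mul_comm]
    · rw [hcardH, hk]
      exact Nat.Coprime.pow_left k hc₁.symm
  have hcK : Subgroup.IsComplement' N K := by
    apply Subgroup.isComplement'_of_coprime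
    · rw [hcardK, hcardA, ← hcardK₂, Nat.mul_comm]
    · rw [hcardK, hk]
      exact Nat.Coprime.pow_left k hc₂.symm
  obtain ⟨a, ha⟩ := conj_of_isComplement'_pgroup hp (Nat.card N) A inferInstance inferInstance
    N hNnorm le_rfl hNp hcoN H K hcH hcK
  -- push the conjugation back down to Aut P
  have hsub1 : H.map A.subtype = ψ₁.range := range_codRestrict_map_subtype ψ₁ A hmemψ
  have hsub2 : K.map A.subtype = φ₂.range := range_codRestrict_map_subtype φ₂ A hmemφ₂
  have hpush : ψ₁.range.map (MulAut.conj (a : MulAut P)).toMonoidHom = φ₂.range := by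
    have h1 := congrArg (Subgroup.map A.subtype) ha
    rw [Subgroup.map_map] at h1
    have hcomm : A.subtype.comp (MulAut.conj a).toMonoidHom
        = (MulAut.conj (a : MulAut P)).toMonoidHom.comp A.subtype := by
      ext x
      simp
    rw [hcomm, ← Subgroup.map_map, hsub1, hsub2] at h1
    exact h1
  let ψ : C₁ →* MulAut P := (MulAut.conj (a : MulAut P)).toMonoidHom.comp ψ₁
  have hψrange : ψ.range = φ₂.range := by
    show ((MulAut.conj (a : MulAut P)).toMonoidHom.comp ψ₁).range = φ₂.range
    rw [MonoidHom.range_comp]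
    exact hpush
  have hψinj : Function.Injective ψ := fun x y hxy =>
    hψ₁inj ((MulAut.conj (a : MulAut P)).injective hxy)
  let f : C₁ ≃* C₂ := ((MonoidHom.ofInjective hψinj).trans
    (MulEquiv.subgroupCongr hψrange)).trans (MonoidHom.ofInjective hφ₂inj).symm
  have hkey : ∀ c, φ₂ (f c) = ψ c := by
    intro c
    show φ₂ ((MonoidHom.ofInjective hφ₂inj).symm
      (MulEquiv.subgroupCongr hψrange (MonoidHom.ofInjective hψinj c))) = ψ c
    rw [MonoidHom.apply_ofInjective_symm]
    rw [MulEquiv.subgroupCongr_apply]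
    exact MonoidHom.ofInjective_apply hψinj
  have hfinal : ∀ c, φ₂ (f c) = ((a : MulAut P) * β₀⁻¹) * φ₁ c * ((a : MulAut P) * β₀⁻¹)⁻¹ := by
    intro c
    rw [hkey]
    show (MulAut.conj (a : MulAut P)) (ψ₁ c) = _
    rw [MulAut.conj_apply, hψ₁app]
    group
  exact ⟨sdIso φ₁ φ₂ ((a : MulAut P) * β₀⁻¹) f hfinal⟩
end

section
/- Let p be a prime, G a finite group, and Q a subgroup of G. Conjugation induces a well-defined map θ : N_G(Q)/Q → Out(Q). Then in the group algebra F_p[Out(Q)] (with F_p = ZMod p), the element W̄ = Σ_{w ∈ N_G(Q)/Q} θ(w) is nonzero if and only if p does not divide |C_G(Q)| / |Z(Q)|, i.e., if and only if C_G(Q)/Z(Q) is a p'-group. -/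
/-- Conjugation induces a well-defined map `θ : N_G(Q)/Q → Out Q`. -/
def theta (G : Type) [Group G] (Q : Subgroup G) :
    (Subgroup.normalizer (Q : Set G) ⧸ Q.subgroupOf (Subgroup.normalizer (Q : Set G))) → Out Q := fun x =>
  Quotient.liftOn' x (fun n => toOut Q (Q.normalizerMonoidHom n))
    (by
      rintro n n' h
      rw [QuotientGroup.leftRel_apply] at h
      apply QuotientGroup.eq.mpr
      refine ⟨(⟨(n : G)⁻¹ * n', h⟩ : Q), ?_⟩
      rw [← map_inv Q.normalizerMonoidHom, ← map_mul Q.normalizerMonoidHom]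
      ext x
      rfl)

/-- `theta` as a monoid hom. -/
def thetaHom (G : Type) [Group G] (Q : Subgroup G) :
    (Subgroup.normalizer (Q : Set G) ⧸ Q.subgroupOf (Subgroup.normalizer (Q : Set G))) →* Out Q :=
  QuotientGroup.lift _ ((toOut Q).comp Q.normalizerMonoidHom) (by
    intro n hn
    rw [Subgroup.mem_subgroupOf] at hn
    apply (QuotientGroup.eq_one_iff _).mpr
    refine ⟨⟨(n : G), hn⟩, ?_⟩
    ext x
    rfl)

lemma theta_eq (G : Type) [Group G] (Q : Subgroup G) :
    theta G Q = ⇑(thetaHom G Q) := by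
  funext w
  induction w using QuotientGroup.induction_on with
  | H n => rfl

lemma centralizer_le_normalizer' {G : Type} [Group G] (Q : Subgroup G) :
    Subgroup.centralizer (Q : Set G) ≤ Subgroup.normalizer (Q : Set G) := by
  intro c hc
  rw [Subgroup.mem_centralizer_iff] at hc
  rw [Subgroup.mem_normalizer_iff]
  intro h
  constructor
  · intro hh
    have h1 := hc h hh
    have h2 : c * h * c⁻¹ = h := by rw [← h1]; group
    rw [h2]; exact hh
  · intro hh
    have h1 := hc _ hh
    have h2 : h = c * h * c⁻¹ := by
      have := mul_left_cancel (a := c) (by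
        calc c * h = (c * h * c⁻¹) * c := by group
        _ = c * (c * h * c⁻¹) := h1)
      exact this
    rw [h2]; exact hh

/-- **Section 1 criterion for `K(Q,G)`.**  For a subgroup `Q` of a finite group `G`, the sum
`W̄ = Σ_{w ∈ N_G(Q)/Q} θ(w)` in the group algebra `F_p[Out Q]` is nonzero if and only if
`p` does not divide `|C_G(Q)|/|Z(Q)|`, i.e. iff `C_G(Q)/Z(Q)` is a `p'`-group. -/
theorem weyl_sum_ne_zero_iff (p : ℕ) (hp : p.Prime)
    (G : Type) [Group G] [Fintype G] (Q : Subgroup G) :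
    (∑ᶠ w : Subgroup.normalizer (Q : Set G) ⧸ Q.subgroupOf (Subgroup.normalizer (Q : Set G)),
        (MonoidAlgebra.single (theta G Q w) (1 : ZMod p) : MonoidAlgebra (ZMod p) (Out Q))) ≠ 0 ↔
      ¬ p ∣ Nat.card (Subgroup.centralizer (Q : Set G)) /
          Nat.card (Q ⊓ Subgroup.centralizer (Q : Set G) : Subgroup G) := by
  classical
  set N := Subgroup.normalizer (Q : Set G) with hN
  set Qb := Q.subgroupOf N with hQb
  set C := Subgroup.centralizer (Q : Set G) with hC
  have hCN : C ≤ N := centralizer_le_normalizer' Q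
  -- the homomorphism ψ : C → N ⧸ Qb
  set ψ : C →* (N ⧸ Qb) := (QuotientGroup.mk' Qb).comp (Subgroup.inclusion hCN) with hψ
  set θ := thetaHom G Q with hθ
  haveI : Finite (N ⧸ Qb) := Quotient.finite _
  letI : Fintype (N ⧸ Qb) := Fintype.ofFinite _
  -- range ψ is exactly the fiber of θ over 1
  have hrange : ∀ w : N ⧸ Qb, θ w = 1 ↔ w ∈ ψ.range := by
    intro w
    induction w using QuotientGroup.induction_on with
    | H n =>
      constructor
      · intro h1
        have h2 : (toOut Q) (Q.normalizerMonoidHom n) = 1 := h1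
        have h3 : Q.normalizerMonoidHom n ∈ Inn ↥Q := (QuotientGroup.eq_one_iff _).mp h2
        obtain ⟨q, hq⟩ := h3
        have hc : (q : G)⁻¹ * (n : G) ∈ C := by
          rw [hC, Subgroup.mem_centralizer_iff]
          intro x hx
          have := congrArg (fun f => ((f ⟨x, hx⟩ : Q) : G)) hq
          simp only [MulAut.conj_apply] at this
          have hqx : (q : G) * x * (q : G)⁻¹ = (n : G) * x * (n : G)⁻¹ := this
          have : x * ((q : G)⁻¹ * n) = ((q : G)⁻¹ * n) * x := by
            have := hqx
            calc x * ((q : G)⁻¹ * n) = (q : G)⁻¹ * ((q:G) * x * (q:G)⁻¹) * n := by group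
            _ = (q : G)⁻¹ * ((n:G) * x * (n:G)⁻¹) * n := by rw [hqx]
            _ = ((q : G)⁻¹ * n) * x := by group
          exact this
        refine ⟨⟨(q : G)⁻¹ * (n : G), hc⟩, ?_⟩
        show QuotientGroup.mk (Subgroup.inclusion hCN ⟨(q : G)⁻¹ * (n : G), hc⟩)
            = QuotientGroup.mk n
        apply QuotientGroup.eq.mpr
        show ((Subgroup.inclusion hCN ⟨(q : G)⁻¹ * (n : G), hc⟩ : N) : G)⁻¹ * (n : G) ∈ Q
        show ((q : G)⁻¹ * (n : G))⁻¹ * (n : G) ∈ Q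
        have : ((q : G)⁻¹ * (n : G))⁻¹ * (n : G) = (n : G)⁻¹ * (q : G) * (n : G) := by group
        rw [this]
        have hn' : (n : G)⁻¹ ∈ N := by
          exact inv_mem n.2
        simpa using (Subgroup.mem_normalizer_iff.mp hn' (q : G)).mp q.2
      · rintro ⟨c, hc⟩
        rw [← hc]
        show (toOut Q) (Q.normalizerMonoidHom (Subgroup.inclusion hCN c)) = 1
        have : Subgroup.inclusion hCN c ∈ Q.normalizerMonoidHom.ker := by
          rw [Subgroup.normalizerMonoidHom_ker, Subgroup.mem_subgroupOf]
          exact c.2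
        rw [this]
        simp
  -- kernel of ψ is Z = Q ⊓ C (inside C)
  have hker : ψ.ker = (Q ⊓ C).subgroupOf C := by
    ext c
    rw [MonoidHom.mem_ker, Subgroup.mem_subgroupOf]
    constructor
    · intro h
      have : Subgroup.inclusion hCN c ∈ Qb := (QuotientGroup.eq_one_iff _).mp h
      rw [hQb, Subgroup.mem_subgroupOf] at this
      exact ⟨this, c.2⟩
    · intro h
      apply (QuotientGroup.eq_one_iff _).mpr
      rw [hQb, Subgroup.mem_subgroupOf]
      exact h.1
  set k := Nat.card ψ.range with hk
  have hZpos : 0 < Nat.card (Q ⊓ C : Subgroup G) := Nat.card_pos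
  -- |C| = k * |Z|
  have hcard : Nat.card C = k * Nat.card (Q ⊓ C : Subgroup G) := by
    have h1 : Nat.card C = Nat.card (C ⧸ ψ.ker) * Nat.card ψ.ker :=
      Subgroup.card_eq_card_quotient_mul_card_subgroup ψ.ker
    have h2 : Nat.card (C ⧸ ψ.ker) = k :=
      Nat.card_congr (QuotientGroup.quotientKerEquivRange ψ).toEquiv
    have h3 : Nat.card ψ.ker = Nat.card (Q ⊓ C : Subgroup G) := by
      rw [hker]
      exact Nat.card_congr (Subgroup.subgroupOfEquivOfLe inf_le_right).toEquiv
    rw [h1, h2, h3]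
  have hdiv : Nat.card C / Nat.card (Q ⊓ C : Subgroup G) = k := by
    rw [hcard, Nat.mul_div_cancel _ hZpos]
  rw [hdiv]
  -- the sum, coefficientwise
  set S : MonoidAlgebra (ZMod p) (Out Q) :=
    ∑ᶠ w : N ⧸ Qb, MonoidAlgebra.single (theta G Q w) (1 : ZMod p) with hS
  have hSsum : S = ∑ w : N ⧸ Qb, MonoidAlgebra.single (θ w) (1 : ZMod p) := by
    rw [hS, finsum_eq_sum_of_fintype]
    simp [theta_eq, hθ]
  have hScoeff : ∀ g : Out Q,
      S.coeff g = ((Finset.univ.filter (fun w : N ⧸ Qb => θ w = g)).card : ZMod p) := by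
    intro g
    rw [hSsum]
    rw [MonoidAlgebra.coeff_sum, Finsupp.finset_sum_apply]
    have : ∀ w : N ⧸ Qb, (MonoidAlgebra.single (θ w) (1 : ZMod p)).coeff g
        = if θ w = g then (1 : ZMod p) else 0 := fun w => Finsupp.single_apply
    rw [Finset.sum_congr rfl (fun w _ => this w)]
    rw [Finset.sum_boole]
  -- fibers of θ over elements of its range all have cardinality k
  have hfiber1 : (Finset.univ.filter (fun w : N ⧸ Qb => θ w = 1)).card = k := by
    rw [← Fintype.card_subtype]
    rw [hk, Nat.card_eq_fintype_card]
    exact Fintype.card_congr (Equiv.subtypeEquivRight (fun w => hrange w))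
  have hfiber : ∀ g : Out Q, ∀ w₀ : N ⧸ Qb, θ w₀ = g →
      (Finset.univ.filter (fun w : N ⧸ Qb => θ w = g)).card = k := by
    intro g w₀ hw₀
    rw [← hfiber1, ← Fintype.card_subtype, ← Fintype.card_subtype]
    apply Fintype.card_congr
    refine ⟨fun w => ⟨w₀⁻¹ * w.1, ?_⟩, fun w => ⟨w₀ * w.1, ?_⟩, ?_, ?_⟩
    · rw [map_mul, map_inv, w.2, hw₀, inv_mul_cancel]
    · rw [map_mul, w.2, hw₀, mul_one]
    · intro w; ext; simp
    · intro w; ext; simp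
  constructor
  · -- S ≠ 0 → ¬ p ∣ k
    intro hne hpk
    apply hne
    refine MonoidAlgebra.coeff_injective (Finsupp.ext fun g => ?_)
    rw [hScoeff g, MonoidAlgebra.coeff_zero, Finsupp.zero_apply]
    rcases Finset.eq_empty_or_nonempty
        (Finset.univ.filter (fun w : N ⧸ Qb => θ w = g)) with he | ⟨w₀, hw₀⟩
    · rw [he]
      simp
    · rw [Finset.mem_filter] at hw₀
      rw [hfiber g w₀ hw₀.2]
      rw [ZMod.natCast_eq_zero_iff]
      exact hpk
  · -- ¬ p ∣ k → S ≠ 0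
    intro hpk hzero
    apply hpk
    have := hScoeff 1
    rw [hzero, MonoidAlgebra.coeff_zero, Finsupp.zero_apply] at this
    rw [hfiber1] at this
    rw [← ZMod.natCast_eq_zero_iff]
    exact this.symm
end

section
/- Let p be a prime and G a finite group. For each subgroup H ≤ G of order prime to p, let χ_H be the ℚ-valued function on the set of p-regular elements of G (elements whose order is prime to p) defined by χ_H(g) = the number of cosets in G/H fixed by left multiplication by g. Then the dimension over ℚ of the linear span of the functions {χ_H : H ≤ G, |H| prime to p} equals the number of conjugacy classes of cyclic subgroups of G of order prime to p. -/
/-- The set of `p`-regular elements of `G`: elements whose order is prime to `p`. -/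
def PRegular (p : ℕ) (G : Type*) [Group G] : Type _ :=
  {g : G // Nat.Coprime (orderOf g) p}

/-- The Brauer character of the permutation module `F_p[G/H]`: the `ℚ`-valued function on
`p`-regular elements sending `g` to the number of cosets in `G/H` fixed by left
multiplication by `g`. -/
noncomputable def permChar (p : ℕ) (G : Type*) [Group G] (H : Subgroup G) :
    PRegular p G → ℚ := fun g =>
  (Nat.card {x : G ⧸ H // g.1 • x = x} : ℚ)

set_option linter.unusedSectionVars false

namespace HKaux

/-- The number of points of `G ⧸ S` fixed by every element of `K`. -/
noncomputable def fixedCount {G : Type} [Group G] (S K : Subgroup G) : ℕ :=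
  Nat.card {x : G ⧸ S // ∀ k ∈ K, k • x = x}

/-- Cyclic `p'`-subgroups of `G`. -/
abbrev CS (p : ℕ) (G : Type) [Group G] : Type :=
  {H : Subgroup G // IsCyclic H ∧ Nat.Coprime (Nat.card H) p}

/-- Conjugacy of cyclic `p'`-subgroups. -/
def crel (p : ℕ) (G : Type) [Group G] (H K : CS p G) : Prop :=
  ∃ g : G, (fun x => g⁻¹ * x * g) '' ((H : Subgroup G) : Set G) = ((K : Subgroup G) : Set G)

section

variable {G : Type} [Group G]

lemma fixedCount_conj (S K K' : Subgroup G) (g : G)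
    (h : (fun x => g⁻¹ * x * g) '' (K : Set G) = (K' : Set G)) :
    fixedCount S K = fixedCount S K' := by
  apply Nat.card_congr
  refine ⟨fun x => ⟨g⁻¹ • x.1, ?_⟩, fun x => ⟨g • x.1, ?_⟩,
    fun x => Subtype.ext (smul_inv_smul g x.1), fun x => Subtype.ext (inv_smul_smul g x.1)⟩
  · intro k' hk'
    obtain ⟨k, hk, rfl⟩ : k' ∈ (fun x => g⁻¹ * x * g) '' (K : Set G) := by
      rw [h]; exact hk'
    have hx := x.2 k hk
    calc (g⁻¹ * k * g) • g⁻¹ • x.1 = g⁻¹ • (k • x.1) := by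
          rw [smul_smul, smul_smul]; congr 1; group
      _ = g⁻¹ • x.1 := by rw [hx]
  · intro k hk
    have hk' : g⁻¹ * k * g ∈ (K' : Set G) := by
      rw [← h]; exact ⟨k, hk, rfl⟩
    have hx := x.2 _ hk'
    calc k • g • x.1 = g • ((g⁻¹ * k * g) • x.1) := by
          rw [smul_smul, smul_smul]; congr 1; group
      _ = g • x.1 := by rw [hx]

lemma permChar_eq (p : ℕ) (S : Subgroup G) (g : PRegular p G) :
    permChar p G S g = (fixedCount S (Subgroup.zpowers g.1) : ℚ) := by
  unfold permChar fixedCount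
  congr 1
  apply Nat.card_congr
  refine Equiv.subtypeEquivRight fun x =>
    ⟨fun hx k hk => ?_, fun hx => hx g.1 (Subgroup.mem_zpowers g.1)⟩
  have : Subgroup.zpowers g.1 ≤ MulAction.stabilizer G x := Subgroup.zpowers_le.mpr hx
  exact this hk

lemma zpowers_isCyclic (g : G) : IsCyclic (Subgroup.zpowers g) := by
  refine ⟨⟨⟨g, Subgroup.mem_zpowers g⟩, fun x => ?_⟩⟩
  obtain ⟨n, hn⟩ := x.2
  exact ⟨n, Subtype.ext (by simpa using hn)⟩

end

noncomputable def theta (p : ℕ) {G : Type} [Group G] (g : PRegular p G) :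
    Quot (crel p G) :=
  Quot.mk _ ⟨Subgroup.zpowers g.1, zpowers_isCyclic g.1,
    by rw [Nat.card_zpowers]; exact g.2⟩

noncomputable def phi (p : ℕ) {G : Type} [Group G] (S : Subgroup G) :
    Quot (crel p G) → ℚ :=
  Quot.lift (fun K : CS p G => (fixedCount S K.1 : ℚ)) fun K K' h => by
    obtain ⟨g, hg⟩ := h
    exact_mod_cast congrArg Nat.cast (fixedCount_conj S K.1 K'.1 g hg)

section

variable {G : Type} [Group G]

lemma permChar_factor (p : ℕ) (S : Subgroup G) :
    permChar p G S = phi p S ∘ theta p :=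
  funext fun g => permChar_eq p S g

lemma theta_surjective (p : ℕ) : Function.Surjective (theta p (G := G)) := by
  intro c
  obtain ⟨K, rfl⟩ := Quot.exists_rep c
  have : IsCyclic K.1 := K.2.1
  obtain ⟨g, hg⟩ := IsCyclic.exists_generator (α := K.1)
  have hz : Subgroup.zpowers (g : G) = K.1 := by
    apply le_antisymm (Subgroup.zpowers_le.mpr g.2)
    intro x hx
    obtain ⟨n, hn⟩ := hg ⟨x, hx⟩
    exact ⟨n, by simpa using congrArg Subtype.val hn⟩
  have hco : Nat.Coprime (orderOf (g : G)) p := by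
    rw [← Nat.card_zpowers, hz]; exact K.2.2
  refine ⟨⟨(g : G), hco⟩, ?_⟩
  exact congrArg (Quot.mk _) (Subtype.ext hz)

variable [Fintype G]

lemma exists_conj_mem (S K : Subgroup G) (h : fixedCount S K ≠ 0) :
    ∃ y : G, ∀ k ∈ K, y⁻¹ * k * y ∈ S := by
  have hne : Nonempty {x : G ⧸ S // ∀ k ∈ K, k • x = x} := (Nat.card_ne_zero.mp h).1
  obtain ⟨⟨x, hx⟩⟩ := hne
  obtain ⟨y, rfl⟩ := QuotientGroup.mk_surjective x
  refine ⟨y, fun k hk => ?_⟩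
  have h1 : ((k⁻¹ * y : G) : G ⧸ S) = (y : G ⧸ S) := hx k⁻¹ (inv_mem hk)
  have h2 := QuotientGroup.eq.mp h1
  simpa [mul_inv_rev, mul_assoc] using h2

lemma card_le_of_fixedCount (S K : Subgroup G) (h : fixedCount S K ≠ 0) :
    Nat.card K ≤ Nat.card S := by
  obtain ⟨y, hy⟩ := exists_conj_mem S K h
  have : Function.Injective (fun k : K => (⟨y⁻¹ * k * y, hy k k.2⟩ : S)) := by
    intro a b hab
    have := congrArg Subtype.val hab
    simp only at this
    ext
    exact mul_left_cancel (mul_right_cancel this)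
  exact Nat.card_le_card_of_injective _ this

lemma conj_eq_of_fixedCount (S K : Subgroup G) (h : fixedCount S K ≠ 0)
    (hcard : Nat.card S ≤ Nat.card K) :
    ∃ y : G, (fun x => y⁻¹ * x * y) '' (K : Set G) = (S : Set G) := by
  obtain ⟨y, hy⟩ := exists_conj_mem S K h
  have hfun : ⇑(MulAut.conj y⁻¹).toMonoidHom = fun x : G => y⁻¹ * x * y := by
    funext x; simp [MulAut.conj_apply]
  have hinj : Function.Injective ⇑(MulAut.conj y⁻¹).toMonoidHom :=
    (MulAut.conj y⁻¹).injective
  set M := Subgroup.map (MulAut.conj y⁻¹).toMonoidHom K with hM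
  have hle : M ≤ S := by
    intro x hx
    obtain ⟨k, hk, rfl⟩ := hx
    rw [show ((MulAut.conj y⁻¹).toMonoidHom k) = y⁻¹ * k * y from congrFun hfun k]
    exact hy k hk
  have hcardM : Nat.card M = Nat.card K :=
    (Nat.card_congr (Subgroup.equivMapOfInjective K _ hinj).toEquiv).symm
  have hMS : M = S := Subgroup.eq_of_le_of_card_ge hle (by rw [hcardM]; exact hcard)
  refine ⟨y, ?_⟩
  rw [← hfun]
  have := congrArg (fun H : Subgroup G => (H : Set G)) hMS
  simpa [hM, Subgroup.coe_map] using this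

lemma fixedCount_self_ne (K : Subgroup G) : fixedCount K K ≠ 0 := by
  have hne : Nonempty {x : G ⧸ K // ∀ k ∈ K, k • x = x} := by
    refine ⟨⟨((1 : G) : G ⧸ K), fun k hk => ?_⟩⟩
    show ((k * 1 : G) : G ⧸ K) = ((1 : G) : G ⧸ K)
    exact QuotientGroup.eq.mpr (by simpa using inv_mem hk)
  exact Nat.card_ne_zero.mpr ⟨hne, inferInstance⟩

end

end HKaux

open HKaux in
/-- **Proposition 3.2 (Harris–Kuhn), reformulated.**  For a finite group `G` and a prime `p`,
the dimension of the `ℚ`-span of the Brauer characters of the permutation modules `F_p[G/H]`,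
as `H` runs over the `p'`-subgroups of `G`, equals the number of conjugacy classes of cyclic
`p'`-subgroups of `G`. -/
theorem rank_span_permChar (p : ℕ) (hp : p.Prime) (G : Type) [Group G] [Fintype G] :
    Module.finrank ℚ
        (Submodule.span ℚ
          {f : PRegular p G → ℚ | ∃ H : Subgroup G, Nat.Coprime (Nat.card H) p ∧
            f = permChar p G H}) =
      Nat.card
        (Quot (fun (H K : {H : Subgroup G // IsCyclic H ∧ Nat.Coprime (Nat.card H) p}) =>
          ∃ g : G, (fun x => g⁻¹ * x * g) '' ((H : Subgroup G) : Set G) =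
            ((K : Subgroup G) : Set G))) := by
  classical
  show _ = Nat.card (Quot (crel p G))
  haveI : Finite (CS p G) :=
    Finite.of_injective (fun H : CS p G => (H.1 : Set G))
      (fun a b hab => Subtype.ext (SetLike.coe_injective hab))
  haveI : Finite (Quot (crel p G)) :=
    Finite.of_surjective (Quot.mk (crel p G)) (fun c => Quot.exists_rep c)
  haveI : Fintype (Quot (crel p G)) := Fintype.ofFinite _
  set L : (Quot (crel p G) → ℚ) →ₗ[ℚ] (PRegular p G → ℚ) :=
    LinearMap.funLeft ℚ ℚ (theta p) with hLdef
  have hLapp : ∀ f, L f = f ∘ theta p := fun f => by rw [hLdef]; rfl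
  have hLinj : Function.Injective L := by
    rw [hLdef]
    exact LinearMap.funLeft_injective_of_surjective ℚ ℚ _ (theta_surjective p)
  set T : Set (Quot (crel p G) → ℚ) :=
    {f | ∃ S : Subgroup G, Nat.Coprime (Nat.card S) p ∧ f = phi p S} with hT
  have himg : {f : PRegular p G → ℚ | ∃ H : Subgroup G, Nat.Coprime (Nat.card H) p ∧
      f = permChar p G H} = L '' T := by
    ext f
    constructor
    · rintro ⟨H, hH, rfl⟩
      exact ⟨phi p H, ⟨H, hH, rfl⟩, (hLapp _).trans (permChar_factor p H).symm⟩
    · rintro ⟨f, ⟨S, hS, rfl⟩, rfl⟩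
      exact ⟨S, hS, by rw [hLapp, permChar_factor]⟩
  rw [himg, Submodule.span_image,
    ← LinearEquiv.finrank_eq (Submodule.equivMapOfInjective L hLinj (Submodule.span ℚ T)),
    Nat.card_eq_fintype_card]
  -- now: finrank (span T) = Fintype.card (Quot (crel p G))
  set v : Quot (crel p G) → (Quot (crel p G) → ℚ) :=
    fun c => phi p (Quot.out c).1 with hv
  have hvval : ∀ c d : Quot (crel p G),
      v d c = (fixedCount (Quot.out d).1 (Quot.out c).1 : ℚ) := by
    intro c d
    conv_lhs => rw [hv, ← Quot.out_eq c]
    rfl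
  have hdiag : ∀ c, v c c ≠ 0 := by
    intro c
    rw [hvval]
    exact_mod_cast fixedCount_self_ne (Quot.out c).1
  have hlin : LinearIndependent ℚ v := by
    rw [Fintype.linearIndependent_iff]
    intro a ha
    by_contra hcon
    push_neg at hcon
    obtain ⟨c0, hc0⟩ := hcon
    set s : Finset (Quot (crel p G)) := Finset.univ.filter (fun c => a c ≠ 0) with hs
    have hsne : s.Nonempty := ⟨c0, by simp [hs, hc0]⟩
    obtain ⟨c, hcs, hmax⟩ := s.exists_max_image (fun c => Nat.card (Quot.out c).1) hsne
    have hac : a c ≠ 0 := by simpa [hs] using hcs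
    have hev : ∑ d, a d * v d c = 0 := by
      have := congrFun ha c
      simpa [Finset.sum_apply] using this
    rw [Finset.sum_eq_single c (fun d _ hdc => ?_) (by simp)] at hev
    · rcases mul_eq_zero.mp hev with h | h
      · exact hac h
      · exact hdiag c h
    · by_cases had : a d = 0
      · simp [had]
      by_cases hvd : v d c = 0
      · simp [hvd]
      exfalso
      apply hdc
      have hfc : fixedCount (Quot.out d).1 (Quot.out c).1 ≠ 0 := by
        rw [hvval c d] at hvd
        exact_mod_cast hvd
      have h1 : Nat.card (Quot.out c).1 ≤ Nat.card (Quot.out d).1 :=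
        card_le_of_fixedCount _ _ hfc
      have h2 : Nat.card (Quot.out d).1 ≤ Nat.card (Quot.out c).1 :=
        hmax d (by simp [hs, had])
      obtain ⟨y, hy⟩ := conj_eq_of_fixedCount _ _ hfc h2
      have hrel : crel p G (Quot.out c) (Quot.out d) := ⟨y, hy⟩
      calc d = Quot.mk _ (Quot.out d) := (Quot.out_eq d).symm
        _ = Quot.mk _ (Quot.out c) := (Quot.sound hrel).symm
        _ = c := Quot.out_eq c
  have hrange : Set.range v ⊆ T := by
    rintro _ ⟨c, rfl⟩
    exact ⟨(Quot.out c).1, (Quot.out c).2.2, rfl⟩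
  apply le_antisymm
  · calc Module.finrank ℚ (Submodule.span ℚ T)
        ≤ Module.finrank ℚ (Quot (crel p G) → ℚ) := Submodule.finrank_le _
      _ = Fintype.card (Quot (crel p G)) := Module.finrank_fintype_fun_eq_card ℚ
  · calc Fintype.card (Quot (crel p G))
        = Module.finrank ℚ (Submodule.span ℚ (Set.range v)) := (finrank_span_eq_card hlin).symm
      _ ≤ Module.finrank ℚ (Submodule.span ℚ T) :=
          Submodule.finrank_mono (Submodule.span_mono hrange)
end

section
/- Let p be a prime and G a finite group. Let H₁, …, H_m be cyclic subgroups of G of order prime to p that are pairwise non-conjugate in G. For each i, let χ_i be the ℚ-valued function on the set of p-regular elements of G (elements of order prime to p) defined by χ_i(g) = the number of cosets in G/H_i fixed by left multiplication by g. Then the functions χ₁, …, χ_m are linearly independent over ℚ. -/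
lemma fixed_iff_conj_mem {G : Type} [Group G] (Hj : Subgroup G) (g a : G) :
    g • (QuotientGroup.mk a : G ⧸ Hj) = QuotientGroup.mk a ↔ a⁻¹ * g * a ∈ Hj := by
  rw [MulAction.Quotient.smul_mk, QuotientGroup.eq]
  constructor
  · intro h
    have := Hj.inv_mem h
    simpa [mul_assoc, mul_inv_rev] using this
  · intro h
    have := Hj.inv_mem h
    simpa [mul_assoc, mul_inv_rev] using this

/-- **Key input to Theorem 0.6.**  The Brauer characters of the permutation modules
`F_p[G/Hᵢ]` attached to pairwise non-conjugate cyclic `p'`-subgroups `H₁, …, H_m` of a finite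
group `G` are linearly independent over `ℚ`. -/
theorem linearIndependent_permChar (p : ℕ) (hp : p.Prime) (G : Type) [Group G] [Fintype G]
    (m : ℕ) (H : Fin m → Subgroup G)
    (hcyc : ∀ i, IsCyclic (H i)) (hcop : ∀ i, Nat.Coprime (Nat.card (H i)) p)
    (hnc : ∀ i j, i ≠ j →
      ¬ ∃ g : G, (fun x => g⁻¹ * x * g) '' ((H i : Subgroup G) : Set G) = (H j : Set G)) :
    LinearIndependent ℚ (fun i => permChar p G (H i)) := by
  rw [Fintype.linearIndependent_iff]
  intro f hf
  by_contra hne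
  push_neg at hne
  obtain ⟨i₀, hi₀⟩ := hne
  classical
  set T : Finset (Fin m) := Finset.univ.filter (fun j => f j ≠ 0) with hT
  have hTne : T.Nonempty := ⟨i₀, by simp [hT, hi₀]⟩
  obtain ⟨i, hiT, hmax⟩ := T.exists_max_image (fun j => Nat.card (H j)) hTne
  -- a generator of H i
  obtain ⟨⟨g, hgH⟩, hgen⟩ := (hcyc i).exists_generator
  have hzp : Subgroup.zpowers g = H i := by
    apply le_antisymm
    · exact Subgroup.zpowers_le.mpr hgH
    · intro x hx
      obtain ⟨n, hn⟩ := hgen ⟨x, hx⟩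
      exact ⟨n, congrArg Subtype.val hn⟩
  have horder : orderOf g = Nat.card (H i) := by rw [← hzp, Nat.card_zpowers]
  have hgreg : Nat.Coprime (orderOf g) p := by rw [horder]; exact hcop i
  set gg : PRegular p G := ⟨g, hgreg⟩ with hgg
  -- for j ∈ T with j ≠ i, the character vanishes at g
  have hzero : ∀ j ∈ T, j ≠ i → permChar p G (H j) gg = 0 := by
    intro j hjT hji
    have hempty : IsEmpty {x : G ⧸ H j // gg.1 • x = x} := by
      constructor
      rintro ⟨x, hx⟩
      obtain ⟨a, rfl⟩ := QuotientGroup.mk_surjective x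
      have hmem : a⁻¹ * g * a ∈ H j := (fixed_iff_conj_mem (H j) g a).mp hx
      have hle : Subgroup.zpowers (a⁻¹ * g * a) ≤ H j := Subgroup.zpowers_le.mpr hmem
      have hcard : Nat.card (H j) ≤ Nat.card (Subgroup.zpowers (a⁻¹ * g * a)) := by
        rw [Nat.card_zpowers]
        have : orderOf (a⁻¹ * g * a) = orderOf g := by
          have := orderOf_injective (MulAut.conj a⁻¹).toMonoidHom
            (MulEquiv.injective (MulAut.conj a⁻¹)) g
          simpa [MulAut.conj_apply, mul_assoc] using this
        rw [this, horder]
        exact hmax j hjT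
      have heq : Subgroup.zpowers (a⁻¹ * g * a) = H j :=
        Subgroup.eq_of_le_of_card_ge hle hcard
      apply hnc i j (fun h => hji h.symm) -- careful: need i ≠ j
      refine ⟨a, ?_⟩
      -- image of H i under conjugation by a equals H j
      have himg : (fun x => a⁻¹ * x * a) '' ((H i : Subgroup G) : Set G) =
          ((Subgroup.zpowers (a⁻¹ * g * a) : Subgroup G) : Set G) := by
        rw [← hzp]
        have : Subgroup.zpowers (a⁻¹ * g * a) =
            (Subgroup.zpowers g).map (MulAut.conj a⁻¹).toMonoidHom := by
          rw [MonoidHom.map_zpowers]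
          congr 1
          simp [MulAut.conj_apply, mul_assoc]
        rw [this, Subgroup.coe_map]
        congr 1
        funext x
        simp [MulAut.conj_apply, mul_assoc]
      rw [himg, heq]
    simp only [permChar]
    rw [@Nat.card_of_isEmpty _ hempty]
    simp
  -- the character of H i at g is positive
  have hpos : 0 < permChar p G (H i) gg := by
    have h1 : gg.1 • (QuotientGroup.mk 1 : G ⧸ H i) = QuotientGroup.mk 1 :=
      (fixed_iff_conj_mem (H i) g 1).mpr (by simpa using hgH)
    have : Nonempty {x : G ⧸ H i // gg.1 • x = x} := ⟨⟨QuotientGroup.mk 1, h1⟩⟩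
    have hfin : Finite {x : G ⧸ H i // gg.1 • x = x} := Subtype.finite
    have := Nat.card_pos (α := {x : G ⧸ H i // gg.1 • x = x})
    unfold permChar
    exact_mod_cast this
  -- evaluate the relation at gg
  have heval := congrFun hf gg
  simp only [Finset.sum_apply, Pi.smul_apply, Pi.zero_apply, smul_eq_mul] at heval
  have hsum : ∑ j, f j * permChar p G (H j) gg = f i * permChar p G (H i) gg := by
    apply Finset.sum_eq_single
    · intro j _ hji
      by_cases hjT : j ∈ T
      · rw [hzero j hjT hji, mul_zero]
      · have : f j = 0 := by simpa [hT] using hjT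
        rw [this, zero_mul]
    · intro h
      exact absurd (Finset.mem_univ i) h
  rw [hsum] at heval
  have hfi : f i ≠ 0 := by simpa [hT] using hiT
  rcases mul_eq_zero.mp heval with h | h
  · exact hfi h
  · exact absurd h (ne_of_gt hpos)
end
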